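/- For a field element q with q ≠ 0 and q not a root of unity, and elements x, t with t ≠ 0, the series Σ_{k=0}^{∞} x^k q^k t^{2k} (q^{-1};q)_k (x;q^{-1})_k / (q;q)_k equals 1 - t^2 x + t^2 x^2. -/

import Mathlib

/-- The `a = -t⁻¹` specialisation of the (a,t)-deformed trefoil invariant:
`Σ_k x^k q^k t^{2k} (q⁻¹;q)_k (x;q⁻¹)_k / (q;q)_k = 1 - t²x + t²x²`. -/
theorem trefoil_FK_t_deformed_Alexander {F : Type*} [Field F] (q x t : F) (hq : q ≠ 0)
    (hroot : ∀ n : ℕ, 0 < n → q ^ n ≠ 1) (ht : t ≠ 0) :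
    (∑ᶠ k : ℕ, x ^ k * q ^ k * t ^ (2 * k) *
        (∏ i ∈ Finset.range k, (1 - q⁻¹ * q ^ i)) *
        (∏ i ∈ Finset.range k, (1 - x * (q⁻¹) ^ i)) /
        (∏ i ∈ Finset.range k, (1 - q * q ^ i))) = 1 - t ^ 2 * x + t ^ 2 * x ^ 2 := by
  have h1 : (1 : F) - q ≠ 0 := by
    have := hroot 1 one_pos
    simp only [pow_one] at this
    exact sub_ne_zero.mpr (Ne.symm this)
  have hsum := finsum_eq_finset_sum_of_support_subset
    (f := fun k : ℕ => x ^ k * q ^ k * t ^ (2 * k) *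
        (∏ i ∈ Finset.range k, (1 - q⁻¹ * q ^ i)) *
        (∏ i ∈ Finset.range k, (1 - x * (q⁻¹) ^ i)) /
        (∏ i ∈ Finset.range k, (1 - q * q ^ i)))
    (s := ({0, 1} : Finset ℕ)) ?_
  · rw [hsum]
    have : (∑ k ∈ ({0, 1} : Finset ℕ), x ^ k * q ^ k * t ^ (2 * k) *
        (∏ i ∈ Finset.range k, (1 - q⁻¹ * q ^ i)) *
        (∏ i ∈ Finset.range k, (1 - x * (q⁻¹) ^ i)) /
        (∏ i ∈ Finset.range k, (1 - q * q ^ i)))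
        = 1 + x * q * t ^ 2 * (1 - q⁻¹) * (1 - x) / (1 - q) := by
      simp [Finset.sum_insert, Finset.prod_range_one]
    rw [this]
    have hq1 : (1 : F) - q⁻¹ = -(1 - q) / q := by field_simp; ring
    rw [hq1]
    field_simp
    ring
  · intro k hk
    simp only [Function.mem_support] at hk
    simp only [Finset.coe_insert, Finset.coe_singleton, Set.mem_insert_iff,
      Set.mem_singleton_iff]
    by_contra h
    push_neg at h
    obtain ⟨h0, h1'⟩ := h
    apply hk
    have h2 : 2 ≤ k := by omega
    have : (∏ i ∈ Finset.range k, (1 - q⁻¹ * q ^ i)) = 0 := by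
      apply Finset.prod_eq_zero (i := 1) (by simp only [Finset.mem_range]; omega)
      simp [inv_mul_cancel₀ hq]
    simp [this]
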